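/- (Jacobson's theorem on weakly closed sets) Let 𝔇 be a weakly closed subset of an associative algebra 𝔘 of linear transformations of a finite-dimensional vector space V over a field F, and assume every element of 𝔇 is nilpotent. Then the non-unital associative subalgebra generated by 𝔇 is nilpotent (as an associative algebra). -/

import Mathlib

/-- A Lie superalgebra structure on an `F`-module `L`: an internal direct sum
decomposition `L = L₀ ⊕ L₁` together with a bilinear bracket satisfying the grading,
super-anticommutativity and super-Jacobi identities (the latter two stated for
homogeneous arguments and extended by bilinearity). -/
structure LieSuperStruct (F : Type*) (L : Type*) [Field F] [AddCommGroup L]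
    [Module F L] where
  L0 : Submodule F L
  L1 : Submodule F L
  compl : IsCompl L0 L1
  bracket : L →ₗ[F] L →ₗ[F] L
  grade00 : ∀ x ∈ L0, ∀ y ∈ L0, bracket x y ∈ L0
  grade01 : ∀ x ∈ L0, ∀ y ∈ L1, bracket x y ∈ L1
  grade10 : ∀ x ∈ L1, ∀ y ∈ L0, bracket x y ∈ L1
  grade11 : ∀ x ∈ L1, ∀ y ∈ L1, bracket x y ∈ L0
  anti_even : ∀ x ∈ L0, ∀ y : L, bracket x y = - bracket y x
  anti_odd : ∀ x ∈ L1, ∀ y ∈ L1, bracket x y = bracket y x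
  jacobi_even : ∀ x ∈ L0, ∀ y z : L,
    bracket x (bracket y z) = bracket (bracket x y) z + bracket y (bracket x z)
  jacobi_odd_even : ∀ x ∈ L1, ∀ y ∈ L0, ∀ z : L,
    bracket x (bracket y z) = bracket (bracket x y) z + bracket y (bracket x z)
  jacobi_odd_odd : ∀ x ∈ L1, ∀ y ∈ L1, ∀ z : L,
    bracket x (bracket y z) = bracket (bracket x y) z - bracket y (bracket x z)

namespace LieSuperStruct

variable {F L : Type*} [Field F] [AddCommGroup L] [Module F L]

/-- The span of all brackets `(x, y)` with `x ∈ M`, `y ∈ N`. -/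
def bracketSpan (S : LieSuperStruct F L) (M N : Submodule F L) : Submodule F L :=
  Submodule.span F {w | ∃ x ∈ M, ∃ y ∈ N, w = S.bracket x y}

/-- Lower central series of a subalgebra `N`: `γ₁ = N`, `γ_{n+1} = (γₙ, N)`. -/
def lcsOn (S : LieSuperStruct F L) (N : Submodule F L) : ℕ → Submodule F L
  | 0 => N
  | n + 1 => S.bracketSpan (S.lcsOn N n) N

/-- Lower central series of `L` itself. -/
def lcs (S : LieSuperStruct F L) : ℕ → Submodule F L := S.lcsOn ⊤

/-- A Lie superalgebra is nilpotent if its lower central series vanishes. -/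
def IsNilpotent (S : LieSuperStruct F L) : Prop := ∃ n, S.lcs n = ⊥

/-- `A` is an ideal of `L`. -/
def IsIdeal (S : LieSuperStruct F L) (A : Submodule F L) : Prop :=
  ∀ x ∈ A, ∀ y : L, S.bracket x y ∈ A ∧ S.bracket y x ∈ A

/-- `A` is a homogeneous (graded) submodule. -/
def IsHomogeneous (S : LieSuperStruct F L) (A : Submodule F L) : Prop :=
  A = (A ⊓ S.L0) ⊔ (A ⊓ S.L1)

/-- The adjoint map of `x`. -/
def ad (S : LieSuperStruct F L) (x : L) : Module.End F L := S.bracket x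

end LieSuperStruct

/-- The left-normed `n`-fold iterated Lie commutator `[x, y, y, …, y]` in an
associative ring. -/
def engelIter {U : Type*} [Ring U] (y : U) (n : ℕ) (x : U) : U :=
  (fun a => a * y - y * a)^[n] x

/-- An associative ring is bounded Lie Engel if it satisfies `[x, y, …, y] = 0`
(`y` repeated `n` times) identically for some `n ≥ 1`. -/
def IsBoundedLieEngel (U : Type*) [Ring U] : Prop :=
  ∃ n : ℕ, 0 < n ∧ ∀ x y : U, engelIter y n x = 0

/-- The (two-sided) ideal of an associative `F`-algebra generated by all
commutators, as an `F`-submodule. -/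
def commIdeal (F U : Type*) [Field F] [Ring U] [Algebra F U] : Submodule F U :=
  Submodule.span F {w | ∃ a x y b : U, w = a * (x * y - y * x) * b}

/-- Lower central series of the associative algebra `U` viewed as a Lie algebra
under the commutator. -/
def assocLcs (F U : Type*) [Field F] [Ring U] [Algebra F U] : ℕ → Submodule F U
  | 0 => ⊤
  | n + 1 => Submodule.span F {w | ∃ a ∈ assocLcs F U n, ∃ b : U, w = a * b - b * a}

/-- `U` is Lie nilpotent: the lower central series of `(U, [·,·])` terminates. -/
def IsLieNilpotentAlg (F U : Type*) [Field F] [Ring U] [Algebra F U] : Prop :=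
  ∃ n, assocLcs F U n = ⊥

/-- `U` satisfies a (nontrivial) polynomial identity. -/
def IsPI (F U : Type*) [Field F] [Ring U] [Algebra F U] : Prop :=
  ∃ (n : ℕ) (f : FreeAlgebra F (Fin n)), f ≠ 0 ∧
    ∀ v : Fin n → U, FreeAlgebra.lift F v f = 0

/-- `U` satisfies a non-matrix polynomial identity: a PI which fails in `M₂(F)`. -/
def IsNonMatrixPI (F U : Type*) [Field F] [Ring U] [Algebra F U] : Prop :=
  ∃ (n : ℕ) (f : FreeAlgebra F (Fin n)),
    (∀ v : Fin n → U, FreeAlgebra.lift F v f = 0) ∧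
    ∃ w : Fin n → Matrix (Fin 2) (Fin 2) F, FreeAlgebra.lift F w f ≠ 0

/-- `U` together with `ι : L → U` is (a realization of) the universal enveloping
algebra of the Lie superalgebra `L`: `ι` is an injective linear map satisfying the
super-commutation relations, its image generates `U`, and the pair has the
universal property. -/
structure IsUEA (F : Type*) {L : Type*} [Field F] [AddCommGroup L] [Module F L]
    (S : LieSuperStruct F L) (U : Type*) [Ring U] [Algebra F U]
    (ι : L →ₗ[F] U) : Prop where
  rel_even : ∀ x ∈ S.L0, ∀ y : L, ι x * ι y - ι y * ι x = ι (S.bracket x y)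
  rel_odd : ∀ x ∈ S.L1, ∀ y ∈ S.L1, ι x * ι y + ι y * ι x = ι (S.bracket x y)
  inj : Function.Injective ι
  gen : Algebra.adjoin F (Set.range ι) = ⊤
  univ : ∀ (B : Type) [Ring B] [Algebra F B] (φ : L →ₗ[F] B),
    (∀ x ∈ S.L0, ∀ y : L, φ x * φ y - φ y * φ x = φ (S.bracket x y)) →
    (∀ x ∈ S.L1, ∀ y ∈ S.L1, φ x * φ y + φ y * φ x = φ (S.bracket x y)) →
    ∃! ψ : U →ₐ[F] B, ∀ x : L, ψ (ι x) = φ x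



section JacobsonAux

open Submodule

variable {F : Type*} {R : Type*} [Field F] [Ring R] [Algebra F R]

/-- Span of products of at least `n` (and at least one) elements of `B`. -/
def jwSpan (F : Type*) [Field F] {R : Type*} [Ring R] [Algebra F R]
    (B : Set R) (n : ℕ) : Submodule F R :=
  Submodule.span F {w | ∃ l : List R, (∀ x ∈ l, x ∈ B) ∧ l ≠ [] ∧ n ≤ l.length ∧ w = l.prod}

lemma prod_mem_jwSpan {B : Set R} {l : List R} (hl : ∀ x ∈ l, x ∈ B) (hne : l ≠ [])
    {n : ℕ} (hn : n ≤ l.length) : l.prod ∈ jwSpan F B n :=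
  Submodule.subset_span ⟨l, hl, hne, hn, rfl⟩

lemma mem_jwSpan_one {B : Set R} {x : R} (hx : x ∈ B) : x ∈ jwSpan F B 1 := by
  have := prod_mem_jwSpan (F := F) (l := [x]) (by simpa using hx) (by simp) (n := 1) (by simp)
  simpa using this

lemma jwSpan_antitone {B : Set R} {n m : ℕ} (h : n ≤ m) : jwSpan F B m ≤ jwSpan F B n :=
  span_mono (fun _ ⟨l, h1, h2, h3, h4⟩ => ⟨l, h1, h2, h.trans h3, h4⟩)

lemma jwSpan_mono {B B' : Set R} (h : B ⊆ B') (n : ℕ) : jwSpan F B n ≤ jwSpan F B' n :=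
  span_mono (fun _ ⟨l, h1, h2, h3, h4⟩ => ⟨l, fun x hx => h (h1 x hx), h2, h3, h4⟩)

lemma jwSpan_mul {B : Set R} (n m : ℕ) :
    jwSpan F B n * jwSpan F B m ≤ jwSpan F B (n + m) := by
  rw [jwSpan, jwSpan, span_mul_span]
  refine span_le.2 ?_
  rintro w ⟨x, ⟨l1, hl1, hne1, hlen1, rfl⟩, y, ⟨l2, hl2, hne2, hlen2, rfl⟩, rfl⟩
  refine subset_span ⟨l1 ++ l2, ?_, by simp [hne1], ?_, (List.prod_append).symm⟩
  · intro x hx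
    rcases List.mem_append.1 hx with h | h
    · exact hl1 x h
    · exact hl2 x h
  · rw [List.length_append]; omega

lemma mul_mem_jwSpan {B : Set R} {x y : R} {n m : ℕ}
    (hx : x ∈ jwSpan F B n) (hy : y ∈ jwSpan F B m) : x * y ∈ jwSpan F B (n + m) :=
  jwSpan_mul n m (mul_mem_mul hx hy)

lemma jwSpan_eq_bot {B : Set R} {r : ℕ}
    (hr : ∀ l : List R, (∀ x ∈ l, x ∈ B) → l.length = r → l.prod = 0) :
    jwSpan F B r = ⊥ := by
  rw [eq_bot_iff]
  refine span_le.2 ?_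
  rintro w ⟨l, hl, hne, hlen, rfl⟩
  have h1 : l = l.take r ++ l.drop r := (List.take_append_drop r l).symm
  have h2 : (l.take r).prod = 0 := by
    refine hr _ (fun x hx => hl x (List.mem_of_mem_take hx)) ?_
    rw [List.length_take]; omega
  have : l.prod = 0 := by
    conv_lhs => rw [h1]
    rw [List.prod_append, h2, zero_mul]
  simp [this]

lemma list_prod_mem_jwSpan {B : Set R} {l : List R} (hne : l ≠ [])
    (h : ∀ x ∈ l, x ∈ jwSpan F B 1) : l.prod ∈ jwSpan F B l.length := by
  induction l with
  | nil => exact absurd rfl hne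
  | cons x t ih =>
    rcases eq_or_ne t [] with rfl | hne'
    · simpa using h x (by simp)
    · rw [List.prod_cons]
      have := mul_mem_jwSpan (h x (by simp)) (ih hne' (fun y hy => h y (by simp [hy])))
      simpa [List.length_cons, Nat.add_comm] using this

/-- Span of positive powers of `c`. -/
def jC (F : Type*) [Field F] {R : Type*} [Ring R] [Algebra F R] (c : R) : Submodule F R :=
  Submodule.span F {w | ∃ k : ℕ, w = c ^ (k + 1)}

lemma c_mem_jC {c : R} : c ∈ jC F c := subset_span ⟨0, (pow_one c).symm⟩

lemma pow_mem_jC {c : R} {k : ℕ} (hk : 1 ≤ k) : c ^ k ∈ jC F c :=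
  subset_span ⟨k - 1, by congr 1; omega⟩

lemma jC_mul_jC {c : R} : jC F c * jC F c ≤ jC F c := by
  rw [jC, span_mul_span]
  refine span_le.2 ?_
  rintro w ⟨x, ⟨i, rfl⟩, y, ⟨j, rfl⟩, rfl⟩
  refine subset_span ⟨i + j + 1, ?_⟩
  show c ^ (i+1) * c ^ (j+1) = _
  rw [← pow_add]; congr 1; omega

/-- The module of "normal forms with at least `n` factors from `B`". -/
def jP (F : Type*) [Field F] {R : Type*} [Ring R] [Algebra F R]
    (B : Set R) (c : R) (n : ℕ) : Submodule F R :=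
  jwSpan F B n ⊔ jwSpan F B n * jC F c

lemma jP_antitone {B : Set R} {c : R} {n m : ℕ} (h : n ≤ m) : jP F B c m ≤ jP F B c n :=
  sup_le_sup (jwSpan_antitone h) (mul_le_mul' (jwSpan_antitone h) le_rfl)

lemma jwSpan_le_jP {B : Set R} {c : R} (n : ℕ) : jwSpan F B n ≤ jP F B c n := le_sup_left

lemma mul_jC_mem_jP {B : Set R} {c : R} {n : ℕ} {x y : R}
    (hx : x ∈ jwSpan F B n) (hy : y ∈ jC F c) : x * y ∈ jP F B c n :=
  Submodule.mem_sup_right (mul_mem_mul hx hy)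

lemma jP_mul_jC {B : Set R} {c : R} {n : ℕ} {x y : R}
    (hx : x ∈ jP F B c n) (hy : y ∈ jC F c) : x * y ∈ jP F B c n := by
  rcases mem_sup.1 hx with ⟨x1, hx1, x2, hx2, rfl⟩
  rw [add_mul]
  refine add_mem (mul_jC_mem_jP hx1 hy) ?_
  have h2 : x2 * y ∈ jwSpan F B n * (jC F c * jC F c) := by
    have h := mul_mem_mul hx2 hy
    rwa [mul_assoc] at h
  exact Submodule.mem_sup_right (mul_le_mul' le_rfl jC_mul_jC h2)


lemma jmul_jP {B : Set R} {c : R} {x y : R} {m : ℕ}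
    (hx : x ∈ jwSpan F B 1) (hy : y ∈ jP F B c m) :
    x * y ∈ jP F B c (m + 1) := by
  rcases mem_sup.1 hy with ⟨y1, hy1, y2, hy2, rfl⟩
  rw [mul_add]
  refine add_mem ?_ ?_
  · exact Submodule.mem_sup_left (by simpa [Nat.add_comm] using mul_mem_jwSpan hx hy1)
  · have h : x * y2 ∈ jwSpan F B 1 * (jwSpan F B m * jC F c) := mul_mem_mul hx hy2
    rw [← mul_assoc] at h
    have h3 : x * y2 ∈ jwSpan F B (1 + m) * jC F c :=
      mul_le_mul' (jwSpan_mul 1 m) le_rfl h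
    rw [Nat.add_comm 1 m] at h3
    exact Submodule.mem_sup_right h3

lemma jc_mul_jC {c x : R} (hx : x ∈ jC F c) : c * x ∈ jC F c := by
  have main : jC F c ≤ Submodule.comap (LinearMap.mulLeft F c) (jC F c) := by
    refine span_le.2 ?_
    rintro w ⟨k, rfl⟩
    simp only [SetLike.mem_coe, mem_comap, LinearMap.mulLeft_apply]
    refine subset_span ⟨k + 1, ?_⟩
    rw [← pow_succ']
  exact main hx

lemma jc_mul_word {B : Set R} {c : R}
    (hrel : ∀ b ∈ B, ∃ γ : F, c * b + γ • (b * c) ∈ jwSpan F B 1) :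
    ∀ l : List R, l ≠ [] → (∀ x ∈ l, x ∈ B) → c * l.prod ∈ jP F B c l.length := by
  intro l
  induction l with
  | nil => intro h; exact absurd rfl h
  | cons b t ih =>
    intro _ hl
    have hbB : b ∈ B := hl b (by simp)
    have hb : b ∈ jwSpan F B 1 := mem_jwSpan_one hbB
    obtain ⟨γ, hγ⟩ := hrel b hbB
    have expand : c * b = (c * b + γ • (b * c)) - γ • (b * c) :=
      (add_sub_cancel_right _ _).symm
    rcases eq_or_ne t [] with rfl | hne'
    · simp only [List.prod_cons, List.prod_nil, mul_one, List.length_cons,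
        List.length_nil]
      rw [expand]
      refine sub_mem (jwSpan_le_jP 1 hγ) (smul_mem _ _ ?_)
      exact mul_jC_mem_jP hb c_mem_jC
    · rw [List.prod_cons, ← mul_assoc, expand, sub_mul, smul_mul_assoc]
      have hlt : ∀ x ∈ t, x ∈ B := fun x hx => hl x (by simp [hx])
      refine sub_mem ?_ (smul_mem _ _ ?_)
      · have := mul_mem_jwSpan hγ (prod_mem_jwSpan hlt hne' le_rfl)
        exact Submodule.mem_sup_left
          (by simpa [List.length_cons, Nat.add_comm] using this)
      · rw [mul_assoc]
        exact jmul_jP hb (ih hne' hlt)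

lemma jc_mul_jP {B : Set R} {c : R}
    (hrel : ∀ b ∈ B, ∃ γ : F, c * b + γ • (b * c) ∈ jwSpan F B 1)
    {m : ℕ} {x : R} (hx : x ∈ jP F B c m) : c * x ∈ jP F B c m := by
  have main : jP F B c m ≤ Submodule.comap (LinearMap.mulLeft F c) (jP F B c m) := by
    refine sup_le ?_ ?_
    · refine span_le.2 ?_
      rintro w ⟨l, hl, hne, hlen, rfl⟩
      simp only [SetLike.mem_coe, mem_comap, LinearMap.mulLeft_apply]
      exact jP_antitone hlen (jc_mul_word hrel l hne hl)
    · rw [jwSpan, jC, span_mul_span]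
      refine span_le.2 ?_
      rintro w ⟨u, ⟨l, hl, hne, hlen, rfl⟩, v, ⟨k, rfl⟩, rfl⟩
      simp only [SetLike.mem_coe, mem_comap, LinearMap.mulLeft_apply]
      rw [← mul_assoc]
      exact jP_mul_jC (jP_antitone hlen (jc_mul_word hrel l hne hl))
        (subset_span ⟨k, rfl⟩)
  exact main hx


attribute [local instance] Classical.propDecidable

/-- Number of elements of a list lying in `B`. -/
noncomputable def jcnt {X : Type*} (B : Set X) : List X → ℕ
  | [] => 0
  | x :: t => (if x ∈ B then 1 else 0) + jcnt B t

lemma jcnt_append {X : Type*} (B : Set X) (u v : List X) :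
    jcnt B (u ++ v) = jcnt B u + jcnt B v := by
  induction u with
  | nil => simp [jcnt]
  | cons x t ih => simp [jcnt, ih]; omega

lemma jcnt_replicate {X : Type*} {B : Set X} {c : X} (hc : c ∉ B) (k : ℕ) :
    jcnt B (List.replicate k c) = 0 := by
  induction k with
  | zero => simp [jcnt]
  | succ n ih => simp [List.replicate_succ, jcnt, hc, ih]

lemma jcnt_eq_zero {X : Type*} {B : Set X} {l : List X} (h : jcnt B l = 0) :
    ∀ x ∈ l, x ∉ B := by
  induction l with
  | nil => simp
  | cons x t ih =>
    intro y hy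
    simp only [jcnt] at h
    rcases List.mem_cons.1 hy with rfl | hyt
    · intro hyB; simp [hyB] at h
    · exact ih (by omega) y hyt

lemma jlead {X : Type*} (B : Set X) (c : X) :
    ∀ l : List X, (∀ x ∈ l, x ∈ B ∨ x = c) →
      ∃ k t, l = List.replicate k c ++ t ∧ (t = [] ∨ ∃ b t', b ∈ B ∧ t = b :: t') := by
  intro l
  induction l with
  | nil => exact fun _ => ⟨0, [], by simp, Or.inl rfl⟩
  | cons x s ih =>
    intro hal
    rcases hal x (by simp) with hx | hx
    · exact ⟨0, x :: s, by simp, Or.inr ⟨x, s, hx, rfl⟩⟩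
    · obtain ⟨k, t, hkt, ht⟩ := ih (fun y hy => hal y (by simp [hy]))
      subst hx
      exact ⟨k + 1, t, by simp [List.replicate_succ, hkt], ht⟩

lemma jrun {X : Type*} (B : Set X) (c : X) (hc : c ∉ B) (s : ℕ) (hs : 1 ≤ s) :
    ∀ (n : ℕ) (l : List X), l.length ≤ n → (∀ x ∈ l, x ∈ B ∨ x = c) →
      s * (jcnt B l) + s ≤ l.length →
      ∃ l₁ l₂, l = l₁ ++ List.replicate s c ++ l₂ := by
  intro n
  induction n with
  | zero =>
    intro l hl _ hlen
    have : l.length = 0 := by omega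
    omega
  | succ n ih =>
    intro l hln hal hlen
    obtain ⟨k, t, rfl, ht⟩ := jlead B c _ hal
    by_cases hk : s ≤ k
    · refine ⟨[], List.replicate (k - s) c ++ t, ?_⟩
      rw [List.nil_append, ← List.append_assoc, ← List.replicate_add]
      congr 2
      omega
    · rcases ht with rfl | ⟨b, t', hb, rfl⟩
      · exfalso
        rw [jcnt_append, jcnt_replicate hc] at hlen
        simp [jcnt] at hlen
        omega
      · have hcnt : jcnt B (List.replicate k c ++ b :: t') = 1 + jcnt B t' := by
          rw [jcnt_append, jcnt_replicate hc]
          simp [jcnt, hb]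
        rw [hcnt] at hlen
        have hlenl : (List.replicate k c ++ b :: t').length = k + t'.length + 1 := by
          simp
          omega
        have hmul : s * (1 + jcnt B t') = s + s * jcnt B t' := by ring
        rw [hmul, hlenl] at hlen
        have hlen' : s * jcnt B t' + s ≤ t'.length := by
          have hks : k + 1 ≤ s := by omega
          linarith
        obtain ⟨l₁, l₂, h⟩ := ih t' (by simp at hln; omega)
          (fun y hy => hal y (by simp [hy])) hlen'
        refine ⟨List.replicate k c ++ b :: l₁, l₂, ?_⟩
        rw [h]
        simp

lemma jmain {B : Set R} {c : R}
    (hrel : ∀ b ∈ B, ∃ γ : F, c * b + γ • (b * c) ∈ jwSpan F B 1) :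
    ∀ l : List R, (∀ x ∈ l, x ∈ B ∨ x = c) → 1 ≤ jcnt B l →
      l.prod ∈ jP F B c (jcnt B l) := by
  intro l
  induction l with
  | nil => intro _ h; simp [jcnt] at h
  | cons x t ih =>
    intro hal hcnt
    have halt : ∀ y ∈ t, y ∈ B ∨ y = c := fun y hy => hal y (by simp [hy])
    by_cases hx : x ∈ B
    · have hxw : x ∈ jwSpan F B 1 := mem_jwSpan_one hx
      have hc1 : jcnt B (x :: t) = 1 + jcnt B t := by simp [jcnt, hx]
      rw [hc1]
      rcases Nat.eq_zero_or_pos (jcnt B t) with h0 | hpos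
      · rw [h0]
        rcases eq_or_ne t [] with rfl | hne
        · simpa using jwSpan_le_jP (F := F) (c := c) 1 hxw
        · have hall : ∀ y ∈ t, y = c := fun y hy =>
            ((halt y hy).resolve_left (jcnt_eq_zero h0 y hy))
          have hprod : t.prod = c ^ t.length := List.prod_eq_pow_card t c hall
          have htl : 1 ≤ t.length := by
            cases t with
            | nil => exact absurd rfl hne
            | cons a u => simp
          rw [List.prod_cons, hprod]
          exact mul_jC_mem_jP hxw (pow_mem_jC htl)
      · rw [List.prod_cons]
        have := jmul_jP hxw (ih halt hpos)
        rwa [Nat.add_comm] at this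
    · have hxc : x = c := (hal x (by simp)).resolve_left hx
      have hc1 : jcnt B (x :: t) = jcnt B t := by simp [jcnt, hx]
      rw [hc1] at hcnt ⊢
      rw [List.prod_cons, hxc]
      exact jc_mul_jP hrel (ih halt hcnt)

lemma jnil_union {B : Set R} {c : R} {r s : ℕ}
    (hr1 : 1 ≤ r) (hs1 : 1 ≤ s)
    (hbot : jwSpan F B r = ⊥) (hcs : c ^ s = 0) (hcB : c ∉ B)
    (hrel : ∀ b ∈ B, ∃ γ : F, c * b + γ • (b * c) ∈ jwSpan F B 1) :
    ∀ l : List R, (∀ x ∈ l, x ∈ B ∨ x = c) → s * r ≤ l.length → l.prod = 0 := by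
  intro l hal hlen
  by_cases hcnt : r ≤ jcnt B l
  · have h1 : l.prod ∈ jP F B c (jcnt B l) := jmain hrel l hal (le_trans hr1 hcnt)
    have h2 : l.prod ∈ jP F B c r := jP_antitone hcnt h1
    have h3 : jP F B c r = ⊥ := by
      rw [jP, hbot, Submodule.bot_mul, bot_sup_eq]
    rw [h3] at h2
    simpa using h2
  · push_neg at hcnt
    have hlen' : s * jcnt B l + s ≤ l.length := by
      have h1 : s * (jcnt B l + 1) ≤ s * r := Nat.mul_le_mul_left s hcnt
      have h2 : s * (jcnt B l + 1) = s * jcnt B l + s := by ring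
      omega
    obtain ⟨l₁, l₂, rfl⟩ := jrun B c hcB s hs1 l.length l le_rfl hal hlen'
    rw [List.prod_append, List.prod_append, List.prod_replicate, hcs, mul_zero,
      zero_mul]


end JacobsonAux

/-- Jacobson: a weakly closed set of nilpotent linear transformations
of a finite-dimensional vector space generates a nilpotent non-unital associative
algebra. -/
theorem jacobson_weakly_closed {F V : Type*} [Field F] [AddCommGroup V] [Module F V]
    [FiniteDimensional F V]
    (𝔘 : Subalgebra F (Module.End F V)) (D : Set (Module.End F V)) (hD : D ⊆ 𝔘)
    (hwc : ∀ a ∈ D, ∀ b ∈ D, ∃ γ : F, a * b + γ • (b * a) ∈ D)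
    (hnil : ∀ a ∈ D, IsNilpotent a) :
    ∃ n : ℕ, 0 < n ∧ ∀ l : List (Module.End F V), l.length = n →
      (∀ x ∈ l, x ∈ NonUnitalAlgebra.adjoin F D) → l.prod = 0 := by
  classical
  let GS : Set (Set (Module.End F V)) :=
    {B | B ⊆ D ∧ (∀ a ∈ B, ∀ b ∈ B, ∃ γ : F, a * b + γ • (b * a) ∈ B) ∧
      ∃ r, 0 < r ∧ ∀ l : List (Module.End F V),
        (∀ x ∈ l, x ∈ B) → l.length = r → l.prod = 0}
  have hempty : (∅ : Set (Module.End F V)) ∈ GS := by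
    refine ⟨Set.empty_subset _, by simp, 1, one_pos, ?_⟩
    intro l hl hlen
    cases l with
    | nil => simp at hlen
    | cons x t => exact absurd (hl x (by simp)) (by simp)
  let f : Set (Module.End F V) → ℕ := fun B => Module.finrank F (jwSpan F B 1)
  have hbdd : BddAbove (f '' GS) := ⟨Module.finrank F (Module.End F V), by
    rintro n ⟨B, -, rfl⟩
    exact Submodule.finrank_le _⟩
  obtain ⟨B₀, hB₀GS, hmax⟩ : ∃ B₀ ∈ GS, ∀ B ∈ GS, f B ≤ f B₀ := by
    have hnonempty : (f '' GS).Nonempty := ⟨f ∅, ⟨∅, hempty, rfl⟩⟩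
    obtain ⟨B₀, hB₀, hfB₀⟩ := Nat.sSup_mem hnonempty hbdd
    exact ⟨B₀, hB₀, fun B hB => by rw [hfB₀]; exact le_csSup hbdd ⟨B, hB, rfl⟩⟩
  obtain ⟨hB₀D, hB₀wc, r₀, hr₀pos, hB₀nil⟩ := hB₀GS
  set E : Submodule F (Module.End F V) := jwSpan F B₀ 1 with hEdef
  have hEbot : jwSpan F B₀ r₀ = ⊥ := jwSpan_eq_bot hB₀nil
  set B : Set (Module.End F V) := D ∩ (E : Set (Module.End F V)) with hBdef
  have hBD : B ⊆ D := Set.inter_subset_left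
  have hBE : ∀ x ∈ B, x ∈ E := fun x hx => hx.2
  have hB₀B : B₀ ⊆ B := fun x hx => ⟨hB₀D hx, mem_jwSpan_one hx⟩
  have hEeq : jwSpan F B 1 = E := by
    refine le_antisymm ?_ (jwSpan_mono hB₀B 1)
    refine Submodule.span_le.2 ?_
    rintro w ⟨l, hl, hne, hlen, rfl⟩
    have h1 := list_prod_mem_jwSpan (F := F) hne (fun x hx => hBE x (hl x hx))
    exact jwSpan_antitone hlen h1
  have hBbot : jwSpan F B r₀ = ⊥ := by
    rw [eq_bot_iff]
    refine Submodule.span_le.2 ?_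
    rintro w ⟨l, hl, hne, hlen, rfl⟩
    have h1 := list_prod_mem_jwSpan (F := F) hne (fun x hx => hBE x (hl x hx))
    have h2 : l.prod ∈ jwSpan F B₀ r₀ := jwSpan_antitone hlen h1
    rw [hEbot] at h2
    simpa using h2
  have hBnillist : ∀ l : List (Module.End F V),
      (∀ x ∈ l, x ∈ B) → l.length = r₀ → l.prod = 0 := by
    intro l hl hlen
    have hne : l ≠ [] := by
      intro h; subst h; simp at hlen; omega
    have h1 : l.prod ∈ jwSpan F B r₀ := prod_mem_jwSpan hl hne (le_of_eq hlen.symm)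
    rw [hBbot] at h1
    simpa using h1
  have hDE : ∀ a ∈ D, a ∈ E := by
    by_contra hcon
    push_neg at hcon
    obtain ⟨a, haD, haE⟩ := hcon
    by_cases hgood : ∃ c, c ∈ D ∧ c ∉ E ∧ ∀ b ∈ B, ∃ γ : F, c * b + γ • (b * c) ∈ E
    · obtain ⟨c, hcD, hcE, hrel⟩ := hgood
      obtain ⟨s₀, hs₀⟩ := hnil c hcD
      have hcs : c ^ (s₀ + 1) = 0 := by rw [pow_succ, hs₀, zero_mul]
      have hcB : c ∉ B := fun h => hcE (hBE c h)
      have hrel' : ∀ b ∈ B, ∃ γ : F, c * b + γ • (b * c) ∈ jwSpan F B 1 := by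
        intro b hb
        obtain ⟨γ, hγ⟩ := hrel b hb
        exact ⟨γ, by rw [hEeq]; exact hγ⟩
      have hN := jnil_union (F := F) hr₀pos (Nat.succ_le_succ (Nat.zero_le s₀))
        hBbot hcs hcB hrel'
      set B' : Set (Module.End F V) := B ∪ {c} with hB'def
      set B₂ : Set (Module.End F V) :=
        D ∩ (jwSpan F B' 1 : Set (Module.End F V)) with hB₂def
      have halB' : ∀ x ∈ B', x ∈ B ∨ x = c := by
        intro x hx
        rcases hx with h | h
        · exact Or.inl h
        · exact Or.inr h
      have hB'bot : jwSpan F B' ((s₀ + 1) * r₀) = ⊥ := by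
        apply jwSpan_eq_bot
        intro l hl hlen
        exact hN l (fun x hx => halB' x (hl x hx)) (le_of_eq hlen.symm)
      have hB₂GS : B₂ ∈ GS := by
        refine ⟨Set.inter_subset_left, ?_, (s₀ + 1) * r₀,
          Nat.mul_pos (Nat.succ_pos s₀) hr₀pos, ?_⟩
        · intro x hx y hy
          obtain ⟨γ, hγ⟩ := hwc x hx.1 y hy.1
          refine ⟨γ, hγ, ?_⟩
          have hxy : x * y ∈ jwSpan F B' 1 :=
            jwSpan_antitone (by omega) (mul_mem_jwSpan hx.2 hy.2)
          have hyx : y * x ∈ jwSpan F B' 1 :=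
            jwSpan_antitone (by omega) (mul_mem_jwSpan hy.2 hx.2)
          exact add_mem hxy (Submodule.smul_mem _ γ hyx)
        · intro l hl hlen
          have hne : l ≠ [] := by
            intro h; subst h; simp at hlen
            omega
          have h1 : l.prod ∈ jwSpan F B' l.length :=
            list_prod_mem_jwSpan hne (fun x hx => (hl x hx).2)
          rw [hlen, hB'bot] at h1
          simpa using h1
      have hcB₂ : c ∈ B₂ :=
        ⟨hcD, mem_jwSpan_one (Set.mem_union_right _ rfl)⟩
      have hBB₂ : B ⊆ B₂ := fun x hx =>
        ⟨hBD hx, mem_jwSpan_one (Set.mem_union_left _ hx)⟩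
      have hlt : E < jwSpan F B₂ 1 := by
        rw [SetLike.lt_iff_le_and_exists]
        refine ⟨?_, c, mem_jwSpan_one hcB₂, hcE⟩
        rw [← hEeq]
        exact jwSpan_mono hBB₂ 1
      have hfin : f B₀ < f B₂ := Submodule.finrank_lt_finrank_of_lt hlt
      exact absurd (hmax B₂ hB₂GS) (by omega)
    · push_neg at hgood
      let DS : ℕ → Submodule F (Module.End F V) := fun n =>
        Submodule.span F {w | ∃ p q : List (Module.End F V),
          (∀ x ∈ p, x ∈ B) ∧ (∀ x ∈ q, x ∈ B) ∧ p.length + q.length = n ∧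
          w = p.prod * a * q.prod}
      have hstepR : ∀ (n : ℕ) (b : Module.End F V), b ∈ B →
          ∀ x ∈ DS n, x * b ∈ DS (n + 1) := by
        intro n b hb
        have hle : DS n ≤ Submodule.comap (LinearMap.mulRight F b) (DS (n + 1)) := by
          refine Submodule.span_le.2 ?_
          rintro w ⟨p, q, hp, hq, hlen, rfl⟩
          simp only [SetLike.mem_coe, Submodule.mem_comap, LinearMap.mulRight_apply]
          refine Submodule.subset_span ⟨p, q ++ [b], hp, ?_, ?_, ?_⟩
          · intro x hx
            rcases List.mem_append.1 hx with h | h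
            · exact hq x h
            · simp at h; subst h; exact hb
          · simp; omega
          · rw [List.prod_append, List.prod_cons, List.prod_nil, mul_one,
              ← mul_assoc]
        exact fun x hx => hle hx
      have hstepL : ∀ (n : ℕ) (b : Module.End F V), b ∈ B →
          ∀ x ∈ DS n, b * x ∈ DS (n + 1) := by
        intro n b hb
        have hle : DS n ≤ Submodule.comap (LinearMap.mulLeft F b) (DS (n + 1)) := by
          refine Submodule.span_le.2 ?_
          rintro w ⟨p, q, hp, hq, hlen, rfl⟩
          simp only [SetLike.mem_coe, Submodule.mem_comap, LinearMap.mulLeft_apply]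
          refine Submodule.subset_span ⟨b :: p, q, ?_, hq, ?_, ?_⟩
          · intro x hx
            rcases List.mem_cons.1 hx with h | h
            · subst h; exact hb
            · exact hp x h
          · simp; omega
          · simp only [List.prod_cons, mul_assoc]
        exact fun x hx => hle hx
      have hDSbot : DS (2 * r₀ - 1) = ⊥ := by
        rw [eq_bot_iff]
        refine Submodule.span_le.2 ?_
        rintro w ⟨p, q, hp, hq, hlen, rfl⟩
        have hcases : r₀ ≤ p.length ∨ r₀ ≤ q.length := by omega
        have hzero : p.prod * a * q.prod = 0 := by
          rcases hcases with h | h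
          · have hps : p.prod = 0 := by
              rw [← List.take_append_drop r₀ p, List.prod_append,
                hBnillist (p.take r₀) (fun x hx => hp x (List.mem_of_mem_take hx))
                  (by rw [List.length_take]; omega), zero_mul]
            rw [hps, zero_mul, zero_mul]
          · have hqs : q.prod = 0 := by
              rw [← List.take_append_drop r₀ q, List.prod_append,
                hBnillist (q.take r₀) (fun x hx => hq x (List.mem_of_mem_take hx))
                  (by rw [List.length_take]; omega), zero_mul]
            rw [hqs, mul_zero]
        simp [hzero]
      have hseq : ∀ n : ℕ, ∃ x, x ∈ D ∧ x ∉ E ∧ x ∈ DS n := by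
        intro n
        induction n with
        | zero =>
          refine ⟨a, haD, haE, Submodule.subset_span ⟨[], [], by simp, by simp,
            by simp, by simp⟩⟩
        | succ n ih =>
          obtain ⟨x, hxD, hxE, hxDS⟩ := ih
          obtain ⟨b, hbB, hbne⟩ := hgood x hxD hxE
          obtain ⟨γ, hγD⟩ := hwc x hxD b (hBD hbB)
          refine ⟨x * b + γ • (b * x), hγD, hbne γ, ?_⟩
          exact add_mem (hstepR n b hbB x hxDS)
            (Submodule.smul_mem _ γ (hstepL n b hbB x hxDS))
      obtain ⟨x, hxD, hxE, hxbot⟩ := hseq (2 * r₀ - 1)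
      rw [hDSbot] at hxbot
      simp only [Submodule.mem_bot] at hxbot
      subst hxbot
      exact hxE (zero_mem E)
  have hDnil : ∀ l : List (Module.End F V),
      (∀ x ∈ l, x ∈ D) → l.length = r₀ → l.prod = 0 := by
    intro l hl hlen
    have hne : l ≠ [] := by
      intro h; subst h; simp at hlen; omega
    have h1 : l.prod ∈ jwSpan F B₀ l.length :=
      list_prod_mem_jwSpan hne (fun x hx => hDE x (hl x hx))
    rw [hlen, hEbot] at h1
    simpa using h1
  have hDbot : jwSpan F D r₀ = ⊥ := jwSpan_eq_bot hDnil
  refine ⟨r₀, hr₀pos, ?_⟩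
  intro l hlen hmem
  have hadj : ∀ x, x ∈ NonUnitalAlgebra.adjoin F D → x ∈ jwSpan F D 1 := by
    have hmul : ∀ x y : Module.End F V, x ∈ jwSpan F D 1 → y ∈ jwSpan F D 1 →
        x * y ∈ jwSpan F D 1 :=
      fun x y hx hy => jwSpan_antitone (by omega) (mul_mem_jwSpan hx hy)
    have hle : NonUnitalAlgebra.adjoin F D ≤
        (jwSpan F D 1).toNonUnitalSubalgebra hmul :=
      NonUnitalAlgebra.adjoin_le (fun x hx => mem_jwSpan_one hx)
    exact fun x hx => hle hx
  have hne : l ≠ [] := by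
    intro h; subst h; simp at hlen; omega
  have h1 : l.prod ∈ jwSpan F D l.length :=
    list_prod_mem_jwSpan hne (fun x hx => hadj x (hmem x hx))
  rw [hlen, hDbot] at h1
  simpa using h1
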